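/- Let (Ω, 𝓕, ℙ) be a probability space, S a finite nonempty type with the discrete measurable structure, m a natural number, and γ : ℕ → Ω → S a sequence of measurable random variables that are mutually independent and identically distributed with common distribution μ (the law of γ 0). Define the sliding-window process W : ℕ → Ω → (Fin (m+1) → S) by W k ω = (fun i => γ (k + i) ω). Then for every k ∈ ℕ and every w, w' : Fin (m+1) → S with ℙ({W k = w}) > 0: (a) if w' i = w (i+1) for all i < m (i.e., w' is the unit shift of w extended by one new symbol), then ℙ({W (k+1) = w'} ∩ {W k = w}) / ℙ({W k = w}) = μ({w' m}), the probability that γ 0 takes the value of the last entry of w'; and (b) otherwise, ℙ({W (k+1) = w'} ∩ {W k = w}) = 0. In particular, the transition probabilities do not depend on k. -/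

import Mathlib

open MeasureTheory ProbabilityTheory

/-- Homogeneous transition kernel of the sliding-window chain built from an i.i.d.
sequence: if `w'` is the unit shift of `w` extended by a new symbol, the transition
probability equals the law of the new symbol; otherwise the transition is impossible.
In particular, the transition probabilities do not depend on `k`. -/
theorem stmt_5 {Ω : Type*} [MeasurableSpace Ω] (P : Measure Ω) [IsProbabilityMeasure P]
    (S : Type*) [Fintype S] [Nonempty S] [MeasurableSpace S] [MeasurableSingletonClass S]
    (m : ℕ) (γ : ℕ → Ω → S)
    (hmeas : ∀ k, Measurable (γ k))
    (hindep : iIndepFun γ P)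
    (hident : ∀ k, IdentDistrib (γ k) (γ 0) P P)
    (μ : Measure S) (hμ : μ = Measure.map (γ 0) P)
    (W : ℕ → Ω → (Fin (m + 1) → S))
    (hW : ∀ k ω, W k ω = fun i : Fin (m + 1) => γ (k + i.val) ω)
    (k : ℕ) (w w' : Fin (m + 1) → S)
    (hpos : 0 < P {ω | W k ω = w}) :
    ((∀ i : Fin (m + 1), (i : ℕ) < m → w' i = w (i + 1)) →
      P ({ω | W (k + 1) ω = w'} ∩ {ω | W k ω = w}) / P {ω | W k ω = w}
        = μ {w' (Fin.last m)}) ∧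
    (¬ (∀ i : Fin (m + 1), (i : ℕ) < m → w' i = w (i + 1)) →
      P ({ω | W (k + 1) ω = w'} ∩ {ω | W k ω = w}) = 0) := by
  constructor
  · intro hshift
    -- extension of w by w' (last)
    set u : ℕ → S := fun n => if h : n - k < m + 1 then w ⟨n - k, h⟩ else w' (Fin.last m)
      with hu
    have hu1 : ∀ i (h : i < m + 1), u (k + i) = w ⟨i, h⟩ := by
      intro i h
      simp only [hu, Nat.add_sub_cancel_left, h, dif_pos]
    have hu2 : u (k + (m + 1)) = w' (Fin.last m) := by
      simp [hu]
      intro h; omega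
    have hA : {ω | W k ω = w}
        = ⋂ n ∈ Finset.image (fun i => k + i) (Finset.range (m + 1)),
            γ n ⁻¹' {u n} := by
      ext ω
      simp only [Set.mem_setOf_eq, hW, funext_iff, Set.mem_iInter, Finset.mem_image,
        Finset.mem_range, Set.mem_preimage, Set.mem_singleton_iff]
      constructor
      · rintro h n ⟨i, hi, rfl⟩
        rw [hu1 i hi]; exact h ⟨i, hi⟩
      · intro h i
        have := h (k + i.val) ⟨i.val, i.isLt, rfl⟩
        rwa [hu1 i.val i.isLt, Fin.eta] at this
    have hB : {ω | W (k + 1) ω = w'} ∩ {ω | W k ω = w}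
        = ⋂ n ∈ Finset.image (fun i => k + i) (Finset.range (m + 2)),
            γ n ⁻¹' {u n} := by
      ext ω
      simp only [Set.mem_inter_iff, Set.mem_setOf_eq, hW, funext_iff, Set.mem_iInter,
        Finset.mem_image, Finset.mem_range, Set.mem_preimage, Set.mem_singleton_iff]
      constructor
      · rintro ⟨h', h⟩ n ⟨i, hi, rfl⟩
        rcases Nat.lt_or_ge i (m + 1) with hlt | hge
        · rw [hu1 i hlt]; exact h ⟨i, hlt⟩
        · have : i = m + 1 := le_antisymm (Nat.lt_succ_iff.mp hi) hge
          subst this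
          rw [hu2]
          have := h' (Fin.last m)
          simpa [Fin.last, Nat.add_comm, Nat.add_assoc, Nat.add_left_comm] using this
      · intro h
        constructor
        · intro i
          rcases Nat.lt_or_ge i.val m with hlt | hge
          · have h1 : i.val + 1 < m + 1 := Nat.succ_lt_succ hlt
            have := h (k + (i.val + 1)) ⟨i.val + 1, Nat.lt_succ_of_lt h1, rfl⟩
            rw [hu1 _ h1] at this
            rw [hshift i hlt]
            have hval : (i + 1 : Fin (m + 1)) = ⟨i.val + 1, h1⟩ := by
              ext
              exact Fin.val_add_one_of_lt (Fin.lt_def.mpr (by simpa using hlt))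
            rw [hval]
            rw [show k + 1 + i.val = k + (i.val + 1) by omega]
            exact this
          · have hi : i = Fin.last m := by
              ext; simpa [Fin.last] using le_antisymm (Nat.lt_succ_iff.mp i.isLt) hge
            subst hi
            have := h (k + (m + 1)) ⟨m + 1, by omega, rfl⟩
            rw [hu2] at this
            simpa [Fin.last, Nat.add_comm, Nat.add_assoc, Nat.add_left_comm] using this
        · intro i
          have := h (k + i.val) ⟨i.val, Nat.lt_succ_of_lt i.isLt, rfl⟩
          rwa [hu1 i.val i.isLt, Fin.eta] at this
    have hmul := hindep.measure_inter_preimage_eq_mul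
      (Finset.image (fun i => k + i) (Finset.range (m + 2))) (sets := fun n => {u n})
      (fun i _ => measurableSet_singleton _)
    have hmulA := hindep.measure_inter_preimage_eq_mul
      (Finset.image (fun i => k + i) (Finset.range (m + 1))) (sets := fun n => {u n})
      (fun i _ => measurableSet_singleton _)
    have hinj : Function.Injective (fun i => k + i) := fun a b h => Nat.add_left_cancel h
    have hprod : ∏ n ∈ Finset.image (fun i => k + i) (Finset.range (m + 2)),
          P (γ n ⁻¹' {u n})
        = (∏ n ∈ Finset.image (fun i => k + i) (Finset.range (m + 1)),
            P (γ n ⁻¹' {u n})) * P (γ (k + (m + 1)) ⁻¹' {u (k + (m + 1))}) := by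
      rw [Finset.prod_image (fun a _ b _ h => hinj h),
        Finset.prod_image (fun a _ b _ h => hinj h),
        Finset.prod_range_succ]
    have hlast : P (γ (k + (m + 1)) ⁻¹' {u (k + (m + 1))}) = μ {w' (Fin.last m)} := by
      rw [hu2, hμ, ← (hident (k + (m + 1))).map_eq,
        Measure.map_apply (hmeas _) (measurableSet_singleton _)]
    rw [hB, hmul, hprod, ← hmulA, ← hA, hlast, mul_comm, mul_div_assoc,
      ENNReal.div_self hpos.ne' (measure_ne_top P _), mul_one]
  · intro hns
    push_neg at hns
    obtain ⟨i, hi, hne⟩ := hns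
    have : {ω | W (k + 1) ω = w'} ∩ {ω | W k ω = w} = ∅ := by
      ext ω
      simp only [Set.mem_inter_iff, Set.mem_setOf_eq, Set.mem_empty_iff_false, iff_false]
      rintro ⟨h', h⟩
      apply hne
      have e1 : γ (k + 1 + i.val) ω = w' i := by
        rw [hW] at h'; exact congrFun h' i
      have h1 : i.val + 1 < m + 1 := Nat.succ_lt_succ hi
      have hval : (i + 1 : Fin (m + 1)) = ⟨i.val + 1, h1⟩ := by
        ext
        exact Fin.val_add_one_of_lt (Fin.lt_def.mpr (by simpa using hi))
      have e2 : γ (k + (i.val + 1)) ω = w (i + 1) := by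
        rw [hW] at h
        have := congrFun h ⟨i.val + 1, h1⟩
        rw [hval]; exact this
      rw [← e1, show k + 1 + i.val = k + (i.val + 1) by omega, e2]
    rw [this, measure_empty]
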